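/- Let τ_e, τ_i, σ_e, σ_i, χ, C_m be real constants with χ ≠ 0, and let J_e, J_i, V_e, V_i, I_ion : ℝ × ℝ → ℝ be twice continuously differentiable functions of (x, t) satisfying the Cattaneo flux laws τ_e∂ₜJ_e + J_e = −σ_e∂ₓV_e and τ_i∂ₜJ_i + J_i = −σ_i∂ₓV_i, together with −∂ₓJ_i = I_t = ∂ₓJ_e where I_t = χ(C_m∂ₜV + I_ion) and V = V_i − V_e. Then, with D_e = σ_e/χ and D_i = σ_i/χ, the pair (V, V_e) satisfies the hyperbolic bidomain equations: τ_eC_m∂ₜₜV + C_m∂ₜV + D_e∂ₓₓV_e = −I_ion − τ_e∂ₜI_ion, and τ_iC_m∂ₜₜV + C_m∂ₜV − D_i∂ₓₓV − D_i∂ₓₓV_e = −I_ion − τ_i∂ₜI_ion. -/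

import Mathlib

/-- The partial derivative in the first (space) variable. -/
noncomputable def pdx (f : ℝ → ℝ → ℝ) (x t : ℝ) : ℝ := deriv (fun y => f y t) x

/-- The partial derivative in the second (time) variable. -/
noncomputable def pdt (f : ℝ → ℝ → ℝ) (x t : ℝ) : ℝ := deriv (fun s => f x s) t

section helpers

variable {f : ℝ → ℝ → ℝ}

lemma hasDerivAt_fst {g : ℝ × ℝ → ℝ} {x t : ℝ} (hg : DifferentiableAt ℝ g (x, t)) :
    HasDerivAt (fun y => g (y, t)) (fderiv ℝ g (x, t) (1, 0)) x := by
  have h1 : HasDerivAt (fun y => ((y, t) : ℝ × ℝ)) (1, 0) x :=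
    (hasDerivAt_id x).prodMk (hasDerivAt_const x t)
  exact (hg.hasFDerivAt.comp_hasDerivAt x h1)

lemma hasDerivAt_snd {g : ℝ × ℝ → ℝ} {x t : ℝ} (hg : DifferentiableAt ℝ g (x, t)) :
    HasDerivAt (fun s => g (x, s)) (fderiv ℝ g (x, t) (0, 1)) t := by
  have h1 : HasDerivAt (fun s => ((x, s) : ℝ × ℝ)) (0, 1) t :=
    (hasDerivAt_const t x).prodMk (hasDerivAt_id t)
  exact (hg.hasFDerivAt.comp_hasDerivAt t h1)

lemma pdx_eq (hf : Differentiable ℝ (Function.uncurry f)) (x t : ℝ) :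
    pdx f x t = fderiv ℝ (Function.uncurry f) (x, t) (1, 0) :=
  (hasDerivAt_fst (hf (x, t))).deriv

lemma pdt_eq (hf : Differentiable ℝ (Function.uncurry f)) (x t : ℝ) :
    pdt f x t = fderiv ℝ (Function.uncurry f) (x, t) (0, 1) :=
  (hasDerivAt_snd (hf (x, t))).deriv

lemma hasDerivAt_of_pdx (hf : Differentiable ℝ (Function.uncurry f)) (x t : ℝ) :
    HasDerivAt (fun y => f y t) (pdx f x t) x := by
  rw [pdx_eq hf]; exact hasDerivAt_fst (hf (x, t))

lemma hasDerivAt_of_pdt (hf : Differentiable ℝ (Function.uncurry f)) (x t : ℝ) :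
    HasDerivAt (fun s => f x s) (pdt f x t) t := by
  rw [pdt_eq hf]; exact hasDerivAt_snd (hf (x, t))

lemma diff_uncurry (hf : ContDiff ℝ 2 (Function.uncurry f)) : Differentiable ℝ (Function.uncurry f) := hf.differentiable two_ne_zero

lemma diff_fderiv (hf : ContDiff ℝ 2 (Function.uncurry f)) : Differentiable ℝ (fderiv ℝ (Function.uncurry f)) :=
  (hf.fderiv_right (m := 1) le_rfl).differentiable one_ne_zero

lemma diff_fd_apply (hf : ContDiff ℝ 2 (Function.uncurry f)) (v : ℝ × ℝ) :
    Differentiable ℝ (fun p => fderiv ℝ (Function.uncurry f) p v) :=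
  (diff_fderiv hf).clm_apply (differentiable_const v)

/-- second derivative in fderiv form -/
lemma snd_apply (hf : ContDiff ℝ 2 (Function.uncurry f)) (v w : ℝ × ℝ) (x t : ℝ) :
    fderiv ℝ (fun p => fderiv ℝ (Function.uncurry f) p v) (x, t) w
      = fderiv ℝ (fderiv ℝ (Function.uncurry f)) (x, t) w v := by
  rw [fderiv_clm_apply ((diff_fderiv hf) (x, t)) (differentiableAt_const v)]
  simp

lemma pdx_pdt_hasDerivAt (hf : ContDiff ℝ 2 (Function.uncurry f)) (x t : ℝ) :
    HasDerivAt (fun y => pdt f y t)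
      (fderiv ℝ (fderiv ℝ (Function.uncurry f)) (x, t) (1, 0) (0, 1)) x := by
  have he : (fun y => pdt f y t)
      = fun y => (fun p => fderiv ℝ (Function.uncurry f) p (0, 1)) (y, t) :=
    funext fun y => pdt_eq (diff_uncurry hf) y t
  rw [he, ← snd_apply hf (0, 1) (1, 0) x t]
  exact hasDerivAt_fst ((diff_fd_apply hf (0, 1)) (x, t))

lemma pdt_pdx_hasDerivAt (hf : ContDiff ℝ 2 (Function.uncurry f)) (x t : ℝ) :
    HasDerivAt (fun s => pdx f x s)
      (fderiv ℝ (fderiv ℝ (Function.uncurry f)) (x, t) (0, 1) (1, 0)) t := by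
  have he : (fun s => pdx f x s)
      = fun s => (fun p => fderiv ℝ (Function.uncurry f) p (1, 0)) (x, s) :=
    funext fun s => pdx_eq (diff_uncurry hf) x s
  rw [he, ← snd_apply hf (1, 0) (0, 1) x t]
  exact hasDerivAt_snd ((diff_fd_apply hf (1, 0)) (x, t))

lemma pdx_pdx_hasDerivAt (hf : ContDiff ℝ 2 (Function.uncurry f)) (x t : ℝ) :
    HasDerivAt (fun y => pdx f y t)
      (fderiv ℝ (fderiv ℝ (Function.uncurry f)) (x, t) (1, 0) (1, 0)) x := by
  have he : (fun y => pdx f y t)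
      = fun y => (fun p => fderiv ℝ (Function.uncurry f) p (1, 0)) (y, t) :=
    funext fun y => pdx_eq (diff_uncurry hf) y t
  rw [he, ← snd_apply hf (1, 0) (1, 0) x t]
  exact hasDerivAt_fst ((diff_fd_apply hf (1, 0)) (x, t))

lemma pdt_pdt_hasDerivAt (hf : ContDiff ℝ 2 (Function.uncurry f)) (x t : ℝ) :
    HasDerivAt (fun s => pdt f x s)
      (fderiv ℝ (fderiv ℝ (Function.uncurry f)) (x, t) (0, 1) (0, 1)) t := by
  have he : (fun s => pdt f x s)
      = fun s => (fun p => fderiv ℝ (Function.uncurry f) p (0, 1)) (x, s) :=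
    funext fun s => pdt_eq (diff_uncurry hf) x s
  rw [he, ← snd_apply hf (0, 1) (0, 1) x t]
  exact hasDerivAt_snd ((diff_fd_apply hf (0, 1)) (x, t))

lemma pdx_pdt_eq (hf : ContDiff ℝ 2 (Function.uncurry f)) (x t : ℝ) :
    pdx (pdt f) x t = fderiv ℝ (fderiv ℝ (Function.uncurry f)) (x, t) (1, 0) (0, 1) :=
  (pdx_pdt_hasDerivAt hf x t).deriv

lemma pdt_pdx_eq (hf : ContDiff ℝ 2 (Function.uncurry f)) (x t : ℝ) :
    pdt (pdx f) x t = fderiv ℝ (fderiv ℝ (Function.uncurry f)) (x, t) (0, 1) (1, 0) :=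
  (pdt_pdx_hasDerivAt hf x t).deriv

lemma pdx_pdx_eq (hf : ContDiff ℝ 2 (Function.uncurry f)) (x t : ℝ) :
    pdx (pdx f) x t = fderiv ℝ (fderiv ℝ (Function.uncurry f)) (x, t) (1, 0) (1, 0) :=
  (pdx_pdx_hasDerivAt hf x t).deriv

lemma pdt_pdt_eq (hf : ContDiff ℝ 2 (Function.uncurry f)) (x t : ℝ) :
    pdt (pdt f) x t = fderiv ℝ (fderiv ℝ (Function.uncurry f)) (x, t) (0, 1) (0, 1) :=
  (pdt_pdt_hasDerivAt hf x t).deriv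

lemma pdx_pdt_comm (hf : ContDiff ℝ 2 (Function.uncurry f)) (x t : ℝ) : pdx (pdt f) x t = pdt (pdx f) x t := by
  rw [pdx_pdt_eq hf, pdt_pdx_eq hf]
  exact (hf.contDiffAt.isSymmSndFDerivAt (by norm_num)).eq (1, 0) (0, 1)

end helpers

/-- In the one-dimensional hyperbolic bidomain model, if the C²
fluxes and potentials satisfy the Cattaneo laws `τ_e∂ₜJ_e + J_e = −σ_e∂ₓV_e`,
`τ_i∂ₜJ_i + J_i = −σ_i∂ₓV_i`, and `−∂ₓJ_i = I_t = ∂ₓJ_e` with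
`I_t = χ(C_m∂ₜV + I_ion)` and `V = V_i − V_e`, then with `D_e = σ_e/χ`,
`D_i = σ_i/χ`, the pair `(V, V_e)` satisfies the hyperbolic bidomain equations
`τ_eC_m∂ₜₜV + C_m∂ₜV + D_e∂ₓₓV_e = −I_ion − τ_e∂ₜI_ion` and
`τ_iC_m∂ₜₜV + C_m∂ₜV − D_i∂ₓₓV − D_i∂ₓₓV_e = −I_ion − τ_i∂ₜI_ion`. -/
theorem hyperbolic_bidomain_from_cattaneo (τe τi σe σi χ Cm : ℝ) (hχ : χ ≠ 0)
    (Je Ji Ve Vi Iion : ℝ → ℝ → ℝ)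
    (hJe : ContDiff ℝ 2 (Function.uncurry Je))
    (hJi : ContDiff ℝ 2 (Function.uncurry Ji))
    (hVe : ContDiff ℝ 2 (Function.uncurry Ve))
    (hVi : ContDiff ℝ 2 (Function.uncurry Vi))
    (hIion : ContDiff ℝ 2 (Function.uncurry Iion))
    (V : ℝ → ℝ → ℝ) (hV : ∀ x t : ℝ, V x t = Vi x t - Ve x t)
    (It : ℝ → ℝ → ℝ)
    (hIt : ∀ x t : ℝ, It x t = χ * (Cm * pdt V x t + Iion x t))
    (hCate : ∀ x t : ℝ, τe * pdt Je x t + Je x t = -σe * pdx Ve x t)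
    (hCati : ∀ x t : ℝ, τi * pdt Ji x t + Ji x t = -σi * pdx Vi x t)
    (hKCLi : ∀ x t : ℝ, -pdx Ji x t = It x t)
    (hKCLe : ∀ x t : ℝ, pdx Je x t = It x t) :
    (∀ x t : ℝ,
      τe * Cm * pdt (pdt V) x t + Cm * pdt V x t + (σe / χ) * pdx (pdx Ve) x t
        = -Iion x t - τe * pdt Iion x t) ∧
    (∀ x t : ℝ,
      τi * Cm * pdt (pdt V) x t + Cm * pdt V x t - (σi / χ) * pdx (pdx V) x t
          - (σi / χ) * pdx (pdx Ve) x t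
        = -Iion x t - τi * pdt Iion x t) := by

  have dJe := diff_uncurry hJe
  have dJi := diff_uncurry hJi
  have dVe := diff_uncurry hVe
  have dVi := diff_uncurry hVi
  have dIion := diff_uncurry hIion
  -- first-order derivatives of V
  have hVt : ∀ x t : ℝ, pdt V x t = pdt Vi x t - pdt Ve x t := by
    intro x t
    have h : (fun s => V x s) = fun s => Vi x s - Ve x s := funext fun s => hV x s
    unfold pdt; rw [h]
    exact ((hasDerivAt_of_pdt dVi x t).sub (hasDerivAt_of_pdt dVe x t)).deriv
  have hVx : ∀ x t : ℝ, pdx V x t = pdx Vi x t - pdx Ve x t := by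
    intro x t
    have h : (fun y => V y t) = fun y => Vi y t - Ve y t := funext fun y => hV y t
    unfold pdx; rw [h]
    exact ((hasDerivAt_of_pdx dVi x t).sub (hasDerivAt_of_pdx dVe x t)).deriv
  -- second-order derivatives of V
  have hVtt : ∀ x t : ℝ, pdt (pdt V) x t = pdt (pdt Vi) x t - pdt (pdt Ve) x t := by
    intro x t
    have h : (fun s => pdt V x s) = fun s => pdt Vi x s - pdt Ve x s :=
      funext fun s => hVt x s
    have h1 := (pdt_pdt_hasDerivAt hVi x t).sub (pdt_pdt_hasDerivAt hVe x t)
    rw [← pdt_pdt_eq hVi, ← pdt_pdt_eq hVe] at h1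
    show deriv (fun s => pdt V x s) t = _
    rw [h]; exact h1.deriv
  have hVxx : ∀ x t : ℝ, pdx (pdx V) x t = pdx (pdx Vi) x t - pdx (pdx Ve) x t := by
    intro x t
    have h : (fun y => pdx V y t) = fun y => pdx Vi y t - pdx Ve y t :=
      funext fun y => hVx y t
    have h1 := (pdx_pdx_hasDerivAt hVi x t).sub (pdx_pdx_hasDerivAt hVe x t)
    rw [← pdx_pdx_eq hVi, ← pdx_pdx_eq hVe] at h1
    show deriv (fun y => pdx V y t) x = _
    rw [h]; exact h1.deriv
  -- time derivative of It
  have hItt : ∀ x t : ℝ,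
      pdt It x t = χ * (Cm * pdt (pdt V) x t + pdt Iion x t) := by
    intro x t
    have h : (fun s => It x s)
        = fun s => χ * (Cm * (pdt Vi x s - pdt Ve x s) + Iion x s) :=
      funext fun s => by rw [hIt x s, hVt x s]
    have h1 := ((((pdt_pdt_hasDerivAt hVi x t).sub (pdt_pdt_hasDerivAt hVe x t)).const_mul
      Cm).add (hasDerivAt_of_pdt dIion x t)).const_mul χ
    rw [← pdt_pdt_eq hVi, ← pdt_pdt_eq hVe] at h1
    show deriv (fun s => It x s) t = _
    rw [h]; exact h1.deriv.trans (by rw [hVtt x t])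
  constructor
  · intro x t
    have hA : HasDerivAt (fun y => τe * pdt Je y t + Je y t)
        (τe * pdt (pdx Je) x t + pdx Je x t) x := by
      have h1 := ((pdx_pdt_hasDerivAt hJe x t).const_mul τe).add (hasDerivAt_of_pdx dJe x t)
      rwa [← pdx_pdt_eq hJe, pdx_pdt_comm hJe] at h1
    have hB : HasDerivAt (fun y => τe * pdt Je y t + Je y t)
        (-σe * pdx (pdx Ve) x t) x := by
      have h2 := (pdx_pdx_hasDerivAt hVe x t).const_mul (-σe)
      rw [← pdx_pdx_eq hVe] at h2
      have he : (fun y => -σe * pdx Ve y t) = fun y => τe * pdt Je y t + Je y t :=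
        funext fun y => (hCate y t).symm
      rwa [he] at h2
    have key := hA.unique hB
    have e1 : pdt (pdx Je) x t = pdt It x t := by
      unfold pdt; congr 1; exact funext fun s => hKCLe x s
    rw [e1, hKCLe x t, hItt x t, hIt x t] at key
    field_simp
    linear_combination key
  · intro x t
    have hA : HasDerivAt (fun y => τi * pdt Ji y t + Ji y t)
        (τi * pdt (pdx Ji) x t + pdx Ji x t) x := by
      have h1 := ((pdx_pdt_hasDerivAt hJi x t).const_mul τi).add (hasDerivAt_of_pdx dJi x t)
      rwa [← pdx_pdt_eq hJi, pdx_pdt_comm hJi] at h1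
    have hB : HasDerivAt (fun y => τi * pdt Ji y t + Ji y t)
        (-σi * pdx (pdx Vi) x t) x := by
      have h2 := (pdx_pdx_hasDerivAt hVi x t).const_mul (-σi)
      rw [← pdx_pdx_eq hVi] at h2
      have he : (fun y => -σi * pdx Vi y t) = fun y => τi * pdt Ji y t + Ji y t :=
        funext fun y => (hCati y t).symm
      rwa [he] at h2
    have key := hA.unique hB
    have e1 : pdt (pdx Ji) x t = -pdt It x t := by
      have h : (fun s => pdx Ji x s) = fun s => -It x s :=
        funext fun s => by linarith [hKCLi x s]
      show deriv (fun s => pdx Ji x s) t = _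
      rw [h, deriv.fun_neg]; rfl
    have e2 : pdx Ji x t = -It x t := by linarith [hKCLi x t]
    rw [e1, e2, hItt x t, hIt x t] at key
    have e3 := hVxx x t
    field_simp
    linear_combination -key - σi * e3
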